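/- If s ≥ t ≥ 3 are integers, then the mutual-visibility number of the Cartesian product C_s □ C_t satisfies μ(C_s □ C_t) ≤ 3t. -/

import Mathlib

open SimpleGraph

/-- `M` is a mutual-visibility set of `G`: any two vertices of `M` are joined by a
shortest path containing no other vertex of `M`. -/
def IsMutualVisibilitySet {V : Type*} (G : SimpleGraph V) (M : Set V) : Prop :=
  ∀ u ∈ M, ∀ v ∈ M, ∃ p : G.Walk u v, p.IsPath ∧ p.length = G.dist u v ∧
    ∀ w ∈ p.support, w ∈ M → w = u ∨ w = v

/-- The mutual-visibility number of `G`: the maximum cardinality of a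
mutual-visibility set of `G`. -/
noncomputable def mutualVisibilityNumber {V : Type*} (G : SimpleGraph V) : ℕ :=
  sSup {n : ℕ | ∃ M : Set V, IsMutualVisibilitySet G M ∧ M.ncard = n}

/-- The interval `I(u,v)`: the set of vertices lying on shortest `u,v`-paths of `G`. -/
def gInterval {V : Type*} (G : SimpleGraph V) (u v : V) : Set V :=
  {w | ∃ p : G.Walk u v, p.IsPath ∧ p.length = G.dist u v ∧ w ∈ p.support}

/-- The cyclic distance `|n-k|_t = min(|n-k|, t-|n-k|)` on `{0,…,t-1}`. -/
def cycDist (t : ℕ) (k n : Fin t) : ℕ :=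
  min (Nat.dist k.val n.val) (t - Nat.dist k.val n.val)

/-- The cyclic interval `[k,n]_t` on `{0,…,t-1}`. -/
def cycInterval (t : ℕ) (k n : Fin t) : Set (Fin t) :=
  if 2 * cycDist t k n < t then {m : Fin t | m.val ∈ Set.uIcc k.val n.val}
  else if 2 * cycDist t k n = t then Set.univ
  else {m : Fin t | m.val ∉ Set.uIcc k.val n.val} ∪ {k, n}
private lemma mod_helper {s m : ℕ} (hm : m < 2 * s) (h : m % s = 1) : m = 1 ∨ m = s + 1 := by
  rcases Nat.lt_or_ge m s with h1 | h1
  · left; rwa [Nat.mod_eq_of_lt h1] at h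
  · right; rw [Nat.mod_eq_sub_mod h1, Nat.mod_eq_of_lt (by omega)] at h; omega

private lemma cyc_adj_val {s : ℕ} {u v : Fin s} (h : (cycleGraph s).Adj u v) :
    u.val + 1 = v.val ∨ v.val + 1 = u.val ∨ (u.val = 0 ∧ v.val + 1 = s) ∨
      (v.val = 0 ∧ u.val + 1 = s) := by
  have hu := u.isLt
  have hv := v.isLt
  rw [cycleGraph_adj', Fin.sub_def, Fin.sub_def] at h
  simp only at h
  rcases h with h | h
  · rcases mod_helper (by omega) h with h' | h' <;> omega
  · rcases mod_helper (by omega) h with h' | h' <;> omega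

private lemma cyc_sep {s : ℕ} {b d : Fin s} (hbd : b.val < d.val) {u c : Fin s}
    (p : (cycleGraph s).Walk u c)
    (hc : b.val < c.val ∧ c.val < d.val) :
    ∀ _ : ¬(b.val < u.val ∧ u.val < d.val), b ∈ p.support ∨ d ∈ p.support := by
  induction p with
  | nil => exact fun hu => absurd hc hu
  | @cons u v c h p ih =>
    intro hu
    by_cases hub : u = b
    · subst hub; left; exact Walk.start_mem_support _
    · by_cases hud : u = d
      · subst hud; right; exact Walk.start_mem_support _
      · have hub' : u.val ≠ b.val := fun h' => hub (Fin.ext h')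
        have hud' : u.val ≠ d.val := fun h' => hud (Fin.ext h')
        have hds := d.isLt
        have hv : ¬(b.val < v.val ∧ v.val < d.val) := by
          rcases cyc_adj_val h with h' | h' | h' | h' <;> omega
        rcases ih hc hv with h' | h'
        · left; rw [Walk.support_cons]; exact List.mem_cons_of_mem _ h'
        · right; rw [Walk.support_cons]; exact List.mem_cons_of_mem _ h'

private lemma proj_len {α β : Type*} {G : SimpleGraph α} {H : SimpleGraph β} :
    ∀ {a e : α × β} (p : (G □ H).Walk a e), ∃ q : G.Walk a.1 e.1,
      q.length ≤ p.length ∧ (q.length = p.length → ∀ v ∈ p.support, v.2 = e.2) := by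
  intro a e p
  induction p with
  | nil =>
    exact ⟨Walk.nil, le_refl _, fun _ v hv => by
      simp only [Walk.support_nil, List.mem_singleton] at hv; rw [hv]⟩
  | @cons a w e h p ih =>
    obtain ⟨q', hle, heq⟩ := ih
    rcases SimpleGraph.boxProd_adj.mp h with ⟨hG, h2⟩ | ⟨hH, h1⟩
    · refine ⟨Walk.cons hG q', by simpa using Nat.succ_le_succ hle, fun hl v hv => ?_⟩
      have hl' : q'.length = p.length := by simpa using hl
      have hw : w.2 = e.2 := heq hl' w (Walk.start_mem_support p)
      rw [Walk.support_cons, List.mem_cons] at hv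
      rcases hv with rfl | hv
      · rw [h2, hw]
      · exact heq hl' v hv
    · refine ⟨q'.copy h1.symm rfl, ?_, ?_⟩
      · rw [Walk.length_copy]; simpa using Nat.le_succ_of_le hle
      · intro hl; rw [Walk.length_copy] at hl; simp at hl; omega

private lemma proj_supp {α β : Type*} {G : SimpleGraph α} {H : SimpleGraph β} :
    ∀ {a e : α × β} (p : (G □ H).Walk a e), (∀ v ∈ p.support, v.2 = e.2) →
      ∃ q : G.Walk a.1 e.1, ∀ x : α, x ∈ q.support ↔ (x, e.2) ∈ p.support := by
  intro a e p
  induction p with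
  | nil =>
    intro _
    refine ⟨Walk.nil, fun x => ?_⟩
    simp only [Walk.support_nil, List.mem_singleton]
    constructor
    · rintro rfl; exact Prod.ext rfl rfl
    · rintro h; exact congrArg Prod.fst h
  | @cons a w e h p ih =>
    intro hs
    have ha : a.2 = e.2 := hs a (Walk.start_mem_support _)
    have hw : w.2 = e.2 := hs w (by rw [Walk.support_cons]; exact List.mem_cons_of_mem _ (Walk.start_mem_support p))
    rcases SimpleGraph.boxProd_adj.mp h with ⟨hG, h2⟩ | ⟨hH, h1⟩
    · obtain ⟨q', hq'⟩ := ih (fun v hv => hs v (by rw [Walk.support_cons]; exact List.mem_cons_of_mem _ hv))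
      refine ⟨Walk.cons hG q', fun x => ?_⟩
      rw [Walk.support_cons, Walk.support_cons, List.mem_cons, List.mem_cons, hq']
      constructor
      · rintro (rfl | hx)
        · left; exact (Prod.ext rfl ha.symm : (a.1, e.2) = a).symm ▸ rfl
        · right; exact hx
      · rintro (hxa | hx)
        · left; exact congrArg Prod.fst hxa
        · right; exact hx
    · exact absurd (ha ▸ hw ▸ hH) (H.irrefl)

theorem mutualVisibilityNumber_cycleGraph_boxProd_cycleGraph_le (s t : ℕ)
    (hts : t ≤ s) (ht : 3 ≤ t) :
    mutualVisibilityNumber (cycleGraph s □ cycleGraph t) ≤ 3 * t := by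
  classical
  refine csSup_le' ?_
  rintro n ⟨M, hM, rfl⟩
  by_contra hlt
  push_neg at hlt
  have hfin : M.Finite := Set.toFinite M
  set F := hfin.toFinset with hF
  have hcard : M.ncard = F.card := Set.ncard_eq_toFinset_card M hfin
  have hmul : (Finset.univ : Finset (Fin t)).card * 3 < F.card := by
    rw [Finset.card_univ, Fintype.card_fin]; omega
  obtain ⟨k, -, hk⟩ := Finset.exists_lt_card_fiber_of_mul_lt_card_of_maps_to
    (t := (Finset.univ : Finset (Fin t))) (f := Prod.snd)
    (fun a _ => Finset.mem_univ _) hmul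
  set F2 := (F.filter fun x => x.2 = k).image Prod.fst with hF2
  have hinj : Set.InjOn Prod.fst (↑(F.filter fun x => x.2 = k) : Set (Fin s × Fin t)) := by
    intro x hx y hy hxy
    simp only [Finset.coe_filter, Set.mem_setOf_eq] at hx hy
    exact Prod.ext hxy (hx.2.trans hy.2.symm)
  have hF2card : 3 < F2.card := by
    rw [hF2, Finset.card_image_of_injOn hinj]; exact hk
  have hmem : ∀ x ∈ F2, (x, k) ∈ M := by
    intro x hx
    simp only [hF2, Finset.mem_image, Finset.mem_filter] at hx
    obtain ⟨p, ⟨hpF, hp2⟩, hp1⟩ := hx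
    have hpx : p = (x, k) := Prod.ext hp1 hp2
    rw [← hpx]
    exact (Set.Finite.mem_toFinset hfin).mp hpF
  set l := F2.sort (· ≤ ·) with hl
  have hlen : 4 ≤ l.length := by rw [hl, Finset.length_sort]; omega
  have hsort : List.Pairwise (· < ·) l := F2.sortedLT_sort.pairwise
  have hget := List.pairwise_iff_get.mp hsort
  set a := l.get ⟨0, by omega⟩ with hadef
  set b := l.get ⟨1, by omega⟩ with hbdef
  set c := l.get ⟨2, by omega⟩ with hcdef
  set d := l.get ⟨3, by omega⟩ with hddef
  have hab : a.val < b.val := hget _ _ (by simp [Fin.lt_def])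
  have hbc : b.val < c.val := hget _ _ (by simp [Fin.lt_def])
  have hcd : c.val < d.val := hget _ _ (by simp [Fin.lt_def])
  have hamem : a ∈ F2 := Finset.mem_sort (α := Fin s) (· ≤ ·) |>.mp (l.get_mem _)
  have hbmem : b ∈ F2 := Finset.mem_sort (α := Fin s) (· ≤ ·) |>.mp (l.get_mem _)
  have hcmem : c ∈ F2 := Finset.mem_sort (α := Fin s) (· ≤ ·) |>.mp (l.get_mem _)
  have hdmem : d ∈ F2 := Finset.mem_sort (α := Fin s) (· ≤ ·) |>.mp (l.get_mem _)
  obtain ⟨p, hpath, hlen', havoid⟩ := hM (a, k) (hmem a hamem) (c, k) (hmem c hcmem)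
  obtain ⟨q0, hq0⟩ := (cycleGraph_preconnected a c).exists_walk_length_eq_dist
  have hup : (cycleGraph s □ cycleGraph t).dist (a, k) (c, k) ≤ (cycleGraph s).dist a c := by
    have hd := SimpleGraph.dist_le (Walk.boxProdLeft (H := cycleGraph t) k q0)
    rwa [show (Walk.boxProdLeft (H := cycleGraph t) k q0).length = q0.length from by
      simp [Walk.boxProdLeft]; exact Walk.length_map _ _, hq0] at hd
  obtain ⟨q, hql, hqe⟩ := proj_len p
  have hdl : (cycleGraph s).dist a c ≤ q.length := SimpleGraph.dist_le q
  have hqlen : q.length = p.length := by omega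
  have hs2 : ∀ v ∈ p.support, v.2 = k := hqe hqlen
  obtain ⟨q2, hq2⟩ := proj_supp p hs2
  have hsep := cyc_sep (by omega : b.val < d.val) q2 ⟨hbc, hcd⟩ (show ¬(b.val < a.val ∧ a.val < d.val) by omega)
  have hcontra : ∀ x : Fin s, x ∈ q2.support → x.val ≠ a.val → x.val ≠ c.val →
      (x, k) ∈ M → False := by
    intro x hx hxa hxc hxM
    rcases havoid (x, k) ((hq2 x).mp hx) hxM with h | h
    · exact hxa (congrArg (fun y => y.1.val) h)
    · exact hxc (congrArg (fun y => y.1.val) h)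
  rcases hsep with hbs | hds
  · exact hcontra b hbs (by omega) (by omega) (hmem b hbmem)
  · exact hcontra d hds (by omega) (by omega) (hmem d hdmem)
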